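/- For f ∈ L²_loc(ℂⁿ), z ∈ ℂⁿ, r > 0, one has G_{2,r}(f)(z) ≤ MO_{2,r}(f)(z), and there is a constant C (independent of f, z, r) with MO_{2,r}(f)(z) ≤ C ( G_{2,r}(f)(z) + G_{2,r}(f̄)(z) ). Consequently BMO = BDA_* ∩ conj(BDA_*) with equivalence of norms ‖f‖_* ≍ ‖f‖_{BDA_*} + ‖f̄‖_{BDA_*}. -/

import Mathlib

open MeasureTheory Metric Complex Filter Set
open scoped ENNReal NNReal Topology Real InnerProductSpace ComplexConjugate

set_option linter.unusedSectionVars false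
set_option linter.unusedVariables false
set_option linter.unnecessarySeqFocus false
set_option maxHeartbeats 1000000

noncomputable section

variable {E : Type*} [NormedAddCommGroup E] [InnerProductSpace ℂ E] [FiniteDimensional ℂ E]
  [MeasurableSpace E] [BorelSpace E]

instance : InnerProductSpace ℝ E := InnerProductSpace.rclikeToReal ℂ E

/-- `G_{q,r}(f)(z)`: integral distance to holomorphic functions on `B(z,r)`. -/
def G (q r : ℝ) (f : E → ℂ) (z : E) : ℝ≥0∞ :=
  ⨅ h : {h : E → ℂ // DifferentiableOn ℂ h (ball z r)},
    ((volume (ball z r))⁻¹ * ∫⁻ w in ball z r, (‖f w - h.1 w‖₊ : ℝ≥0∞) ^ q) ^ (1/q)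

/-- membership in `L^q_loc`. -/
def LocLq (q : ℝ) (f : E → ℂ) : Prop :=
  ∀ (z : E) (r : ℝ), 0 < r → MemLp f (ENNReal.ofReal q) (volume.restrict (ball z r))

/-- The mean oscillation `MO_{2,r}(f)(z)` over the ball `B(z,r)`. -/
def MO (r : ℝ) (f : E → ℂ) (z : E) : ℝ≥0∞ :=
  ((volume (ball z r))⁻¹ *
      ∫⁻ w in ball z r, (‖f w - ⨍ u in ball z r, f u‖₊ : ℝ≥0∞) ^ (2 : ℝ)) ^ (1/2 : ℝ)

/-- circle average of a holomorphic function. -/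
lemma circleAvg {H : E → ℂ} {r : ℝ} (hr : 0 < r)
    (hd : DifferentiableOn ℂ H (ball (0:E) r)) {w : E} (hw : w ∈ ball (0:E) r) :
    ∫ θ in Set.Ioc 0 (2*π), H (Complex.exp (θ * Complex.I) • w) = (2*π : ℝ) • H 0 := by
  rcases eq_or_ne w 0 with rfl | hw0
  · simp only [smul_zero]
    rw [setIntegral_const]
    congr 1
    simp [Real.volume_Ioc, Real.pi_pos.le, ENNReal.toReal_ofReal (by positivity)]
  · set F : ℂ → ℂ := fun lam => H (lam • w) with hF
    have hwr : ‖w‖ < r := by simpa [mem_ball, dist_eq_norm] using hw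
    have hw' : (0:ℝ) < ‖w‖ := norm_pos_iff.2 hw0
    have hR : (1:ℝ) < r / ‖w‖ := (one_lt_div hw').2 hwr
    have hFd : DifferentiableOn ℂ F (Metric.ball (0:ℂ) (r / ‖w‖)) := by
      apply hd.comp
      · intro lam _
        exact (differentiable_id.smul_const w).differentiableAt.differentiableWithinAt
      · intro lam hlam
        simp only [mem_ball, dist_zero_right] at hlam ⊢
        rw [norm_smul]
        calc ‖lam‖ * ‖w‖ < (r / ‖w‖) * ‖w‖ := by gcongr
          _ = r := by field_simp
    have hcl : DiffContOnCl ℂ F (Metric.ball (0:ℂ) 1) := by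
      refine DifferentiableOn.diffContOnCl ?_
      apply hFd.mono
      intro lam hlam
      rw [closure_ball (0:ℂ) one_ne_zero] at hlam
      simp only [Metric.mem_closedBall, dist_zero_right] at hlam
      exact Metric.mem_ball.2 (by simpa [dist_zero_right] using lt_of_le_of_lt hlam hR)
    have h0 : (0:ℂ) ∈ Metric.ball (0:ℂ) 1 := by simp
    have key := hcl.circleIntegral_sub_inv_smul h0
    rw [circleIntegral] at key
    have hne : ∀ θ : ℝ, circleMap 0 1 θ ≠ 0 := fun θ => by
      simp [circleMap_zero, Complex.exp_ne_zero]
    have keq : ∀ θ : ℝ, deriv (circleMap 0 1) θ • (circleMap 0 1 θ - 0)⁻¹ • F (circleMap 0 1 θ)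
        = Complex.I * F (Complex.exp (θ * Complex.I)) := fun θ => by
      rw [deriv_circleMap]
      simp only [smul_eq_mul, sub_zero, circleMap_zero, Complex.ofReal_one, one_mul]
      field_simp [Complex.exp_ne_zero]
    rw [intervalIntegral.integral_congr (g := fun θ : ℝ => Complex.I * F (Complex.exp (θ * Complex.I))) (fun θ _ => keq θ)] at key
    rw [intervalIntegral.integral_const_mul] at key
    have key2 : (∫ θ in (0:ℝ)..(2*π), F (Complex.exp (θ * Complex.I))) = (2*π : ℝ) • F 0 := by
      have h' : Complex.I * (∫ θ in (0:ℝ)..(2*π), F (Complex.exp (θ * Complex.I)))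
          = Complex.I * ((2*π : ℝ) • F 0) := by
        rw [key, smul_eq_mul, Complex.real_smul]
        push_cast
        ring
      exact mul_left_cancel₀ Complex.I_ne_zero h'
    rw [intervalIntegral.integral_of_le (by positivity)] at key2
    rw [hF] at key2
    simpa using key2

/-- rotation by a unit complex number as a real-linear isometry equivalence -/
def rotE (c : ℂ) (hc : c ≠ 0) (hc1 : ‖c‖ = 1) : E ≃ₗᵢ[ℝ] E :=
  { toLinearEquiv := (LinearEquiv.smulOfNeZero ℂ E c hc).restrictScalars ℝ
    norm_map' := fun w => by
      show ‖c • w‖ = ‖w‖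
      rw [norm_smul, hc1, one_mul] }

lemma rotE_apply (c : ℂ) (hc : c ≠ 0) (hc1 : ‖c‖ = 1) (w : E) : rotE c hc hc1 w = c • w := rfl

lemma rotE_preimage_ball (c : ℂ) (hc : c ≠ 0) (hc1 : ‖c‖ = 1) (r : ℝ) :
    (rotE c hc hc1) ⁻¹' (ball (0:E) r) = ball (0:E) r := by
  ext w
  simp [mem_ball, dist_zero_right, rotE_apply, norm_smul, hc1]

lemma rot_integral (c : ℂ) (hc : c ≠ 0) (hc1 : ‖c‖ = 1) (r : ℝ) (H : E → ℂ) :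
    ∫ w in ball (0:E) r, H (c • w) = ∫ w in ball (0:E) r, H w := by
  have mp := (rotE c hc hc1 : E ≃ₗᵢ[ℝ] E).measurePreserving
  have := mp.setIntegral_preimage_emb
    (rotE c hc hc1).toHomeomorph.measurableEmbedding H (ball (0:E) r)
  rw [rotE_preimage_ball] at this
  exact this

/-- rotation map on measure restricted to ball -/
lemma rot_map_restrict (c : ℂ) (hc : c ≠ 0) (hc1 : ‖c‖ = 1) (r : ℝ) :
    Measure.map (fun w : E => c • w) (volume.restrict (ball (0:E) r))
      = volume.restrict (ball (0:E) r) := by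
  have mp := (rotE c hc hc1 : E ≃ₗᵢ[ℝ] E).measurePreserving
  have := mp.restrict_preimage (s := ball (0:E) r) measurableSet_ball
  rw [rotE_preimage_ball] at this
  exact this.map_eq

lemma mvp0 {H : E → ℂ} {r : ℝ} (hr : 0 < r)
    (hd : DifferentiableOn ℂ H (ball (0:E) r))
    (hi : IntegrableOn H (ball (0:E) r) volume) :
    ∫ w in ball (0:E) r, H w = (volume (ball (0:E) r)).toReal • H 0 := by
  set μθ : Measure ℝ := volume.restrict (Set.Ioc (0:ℝ) (2*π)) with hμθ
  set ν : Measure E := volume.restrict (ball (0:E) r) with hν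
  have hexp : ∀ θ : ℝ, Complex.exp (θ * Complex.I) ≠ 0 := fun θ => Complex.exp_ne_zero _
  have hexp1 : ∀ θ : ℝ, ‖Complex.exp ((θ:ℂ) * Complex.I)‖ = 1 := fun θ =>
    Complex.norm_exp_ofReal_mul_I θ
  -- measure preserving skew product
  have hgm : Measurable (Function.uncurry fun (θ : ℝ) (w : E) => Complex.exp (θ * Complex.I) • w) := by
    apply Continuous.measurable
    exact (Complex.continuous_exp.comp (continuous_ofReal.comp continuous_fst |>.mul continuous_const)).smul continuous_snd
  have mpT : MeasurePreserving (fun p : ℝ × E => (p.1, Complex.exp (p.1 * Complex.I) • p.2))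
      (μθ.prod ν) (μθ.prod ν) :=
    (MeasurePreserving.id μθ).skew_product hgm
      (ae_of_all _ fun θ => rot_map_restrict _ (hexp θ) (hexp1 θ) r)
  -- integrability
  have HInt2 : Integrable (fun p : ℝ × E => H p.2) (μθ.prod ν) := by
    have h1 : Integrable H (Measure.map Prod.snd (μθ.prod ν)) := by
      rw [Measure.map_snd_prod]
      exact (hi.smul_measure (by finiteness))
    exact h1.comp_measurable measurable_snd
  have ΦInt : Integrable (Function.uncurry fun (θ : ℝ) (w : E) =>
      H (Complex.exp (θ * Complex.I) • w)) (μθ.prod ν) := by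
    have := (mpT.integrable_comp HInt2.aestronglyMeasurable).2 HInt2
    exact this
  have swap := MeasureTheory.integral_integral_swap ΦInt
  -- LHS of swap
  have lhs : (∫ θ, ∫ w, H (Complex.exp (θ * Complex.I) • w) ∂ν ∂μθ)
      = (2*π : ℝ) • ∫ w, H w ∂ν := by
    have : ∀ θ : ℝ, (∫ w, H (Complex.exp (θ * Complex.I) • w) ∂ν) = ∫ w, H w ∂ν := fun θ =>
      rot_integral _ (hexp θ) (hexp1 θ) r H
    rw [integral_congr_ae (ae_of_all _ this), integral_const]
    congr 1
    simp [hμθ, Real.volume_Ioc, Real.pi_pos.le, ENNReal.toReal_ofReal (by positivity : (0:ℝ) ≤ 2*π)]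
  -- RHS of swap
  have rhs : (∫ w, ∫ θ, H (Complex.exp (θ * Complex.I) • w) ∂μθ ∂ν)
      = (2*π : ℝ) • ((volume (ball (0:E) r)).toReal • H 0) := by
    rw [hν, setIntegral_congr_fun measurableSet_ball
      (fun w hw => circleAvg hr hd hw), setIntegral_const]
    rw [smul_comm]
    rfl
  rw [lhs, rhs] at swap
  have h2π : (2*π : ℝ) ≠ 0 := by positivity
  exact smul_right_injective ℂ h2π swap

lemma mvp {h : E → ℂ} {z : E} {r : ℝ} (hr : 0 < r)
    (hd : DifferentiableOn ℂ h (ball z r))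
    (hi : IntegrableOn h (ball z r) volume) :
    ∫ w in ball z r, h w = (volume (ball z r)).toReal • h z := by
  have hpre : (fun u : E => z + u) ⁻¹' (ball z r) = ball (0:E) r := by
    ext u; simp [mem_ball, dist_eq_norm, add_sub_cancel_left]
  have mp : MeasurePreserving (fun u : E => z + u) volume volume :=
    measurePreserving_add_left volume z
  have emb : MeasurableEmbedding (fun u : E => z + u) :=
    (Homeomorph.addLeft z).measurableEmbedding
  have key := mp.setIntegral_preimage_emb emb h (ball z r)
  rw [hpre] at key
  have hd0 : DifferentiableOn ℂ (fun u : E => h (z + u)) (ball (0:E) r) := by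
    apply hd.comp
    · exact fun u _ => ((differentiable_const z).add differentiable_id).differentiableAt.differentiableWithinAt
    · intro u hu
      have : u ∈ (fun u : E => z + u) ⁻¹' (ball z r) := by rw [hpre]; exact hu
      exact this
  have hi0 : IntegrableOn (fun u : E => h (z + u)) (ball (0:E) r) volume := by
    have mpr := mp.restrict_preimage (s := ball z r) measurableSet_ball
    rw [hpre] at mpr
    exact (mpr.integrable_comp_emb emb).2 hi
  have := mvp0 hr hd0 hi0
  rw [key] at this
  rw [this, add_zero]
  congr 2
  exact (Measure.addHaar_ball_center volume z r).symm

lemma avg_eq_center {h : E → ℂ} {z : E} {r : ℝ} (hr : 0 < r)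
    (hd : DifferentiableOn ℂ h (ball z r))
    (hi : IntegrableOn h (ball z r) volume) :
    ⨍ w in ball z r, h w = h z := by
  rw [setAverage_eq, mvp hr hd hi, smul_smul]
  have h1 : (volume (ball z r)).toReal ≠ 0 := by
    have := measure_ball_pos volume z hr
    have h2 : volume (ball z r) < ⊤ := measure_ball_lt_top
    simp [ENNReal.toReal_eq_zero_iff, this.ne', h2.ne]
  rw [show (volume.real (ball z r))⁻¹ * (volume (ball z r)).toReal = 1 from inv_mul_cancel₀ h1, one_smul]

section Basics
variable {z : E} {r : ℝ}

lemma ball_fin (z : E) (r : ℝ) : IsFiniteMeasure (volume.restrict (ball z r)) :=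
  ⟨by rw [Measure.restrict_apply_univ]; exact measure_ball_lt_top⟩

lemma mE_pos (hr : 0 < r) : 0 < volume (ball z r) := measure_ball_pos volume z hr
lemma mE_lt_top : volume (ball z r) < ⊤ := measure_ball_lt_top

/-- Lemma A : average bound -/
lemma avg_nnnorm_le (hr : 0 < r) {g : E → ℂ}
    (hg : MemLp g 2 (volume.restrict (ball z r))) :
    (‖⨍ w in ball z r, g w‖₊ : ℝ≥0∞) * (volume (ball z r)) ^ (1/2 : ℝ)
      ≤ eLpNorm g 2 (volume.restrict (ball z r)) := by
  haveI := ball_fin z r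
  set ν := volume.restrict (ball z r) with hν
  set m := volume (ball z r) with hm
  have hm0 : m ≠ 0 := (mE_pos hr).ne'
  have hmt : m ≠ ⊤ := mE_lt_top.ne
  have hgi : Integrable g ν := hg.integrable one_le_two
  -- step 1 : ‖⨍ g‖₊ ≤ m⁻¹ * eLpNorm g 1 ν
  have step1 : (‖⨍ w in ball z r, g w‖₊ : ℝ≥0∞) ≤ m⁻¹ * eLpNorm g 1 ν := by
    have h1 : ‖⨍ w in ball z r, g w‖ ≤ m.toReal⁻¹ * ∫ w, ‖g w‖ ∂ν := by
      rw [setAverage_eq, norm_smul, norm_inv, Real.norm_eq_abs,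
        _root_.abs_of_nonneg measureReal_nonneg, measureReal_def]
      gcongr
      exact norm_integral_le_integral_norm _
    have h2 : ENNReal.ofReal (∫ w, ‖g w‖ ∂ν) = eLpNorm g 1 ν := by
      rw [MeasureTheory.ofReal_integral_norm_eq_lintegral_enorm hgi,
        eLpNorm_one_eq_lintegral_enorm]
    calc (‖⨍ w in ball z r, g w‖₊ : ℝ≥0∞)
        = ENNReal.ofReal ‖⨍ w in ball z r, g w‖ := (ofReal_norm_eq_enorm _).symm
      _ ≤ ENNReal.ofReal (m.toReal⁻¹ * ∫ w, ‖g w‖ ∂ν) := ENNReal.ofReal_le_ofReal h1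
      _ = ENNReal.ofReal m.toReal⁻¹ * ENNReal.ofReal (∫ w, ‖g w‖ ∂ν) := by
          rw [ENNReal.ofReal_mul (by positivity)]
      _ = m⁻¹ * eLpNorm g 1 ν := by
          rw [h2, ENNReal.ofReal_inv_of_pos (ENNReal.toReal_pos hm0 hmt),
            ENNReal.ofReal_toReal hmt]
  -- step 2 : eLpNorm g 1 ≤ eLpNorm g 2 * m ^ (1/2)
  have step2 : eLpNorm g 1 ν ≤ eLpNorm g 2 ν * m ^ (1/2 : ℝ) := by
    have := eLpNorm_le_eLpNorm_mul_rpow_measure_univ (p := 1) (q := 2)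
      one_le_two hg.aestronglyMeasurable
    have e : (1/(1:ℝ≥0∞).toReal - 1/(2:ℝ≥0∞).toReal : ℝ) = 1/2 := by norm_num
    rw [e, Measure.restrict_apply_univ] at this
    exact this
  calc (‖⨍ w in ball z r, g w‖₊ : ℝ≥0∞) * m ^ (1/2 : ℝ)
      ≤ (m⁻¹ * (eLpNorm g 2 ν * m ^ (1/2 : ℝ))) * m ^ (1/2 : ℝ) := by
        gcongr
        exact step1.trans (by gcongr)
    _ = eLpNorm g 2 ν * (m⁻¹ * (m ^ (1/2 : ℝ) * m ^ (1/2 : ℝ))) := by ring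
    _ = eLpNorm g 2 ν := by
        rw [← ENNReal.rpow_add _ _ hm0 hmt]
        norm_num
        rw [ENNReal.inv_mul_cancel hm0 hmt, mul_one]

/-- Lemma B : distance to average is at most twice distance to any constant. -/
lemma dist_avg_le (hr : 0 < r) {g : E → ℂ}
    (hg : MemLp g 2 (volume.restrict (ball z r))) (c : ℂ) :
    eLpNorm (fun w => g w - ⨍ u in ball z r, g u) 2 (volume.restrict (ball z r))
      ≤ 2 * eLpNorm (fun w => g w - c) 2 (volume.restrict (ball z r)) := by
  haveI := ball_fin z r
  set ν := volume.restrict (ball z r) with hν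
  set m := volume (ball z r) with hm
  have hm0 : m ≠ 0 := (mE_pos hr).ne'
  have hmt : m ≠ ⊤ := mE_lt_top.ne
  have hν0 : ν ≠ 0 := by
    intro h
    apply hm0
    rw [hm, ← Measure.restrict_apply_univ, ← hν, h]
    simp
  have hgi : Integrable g ν := hg.integrable one_le_two
  have hgc : MemLp (fun w => g w - c) 2 ν := hg.sub (memLp_const c)
  -- average of g - c
  have havg : ⨍ w in ball z r, (g w - c) = (⨍ u in ball z r, g u) - c := by
    rw [setAverage_eq, setAverage_eq, integral_sub hgi (integrable_const c),
      smul_sub, setIntegral_const, smul_smul, ← hν,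
      inv_mul_cancel₀ (show volume.real (ball z r) ≠ 0 from ENNReal.toReal_ne_zero.2 ⟨hm0, hmt⟩), one_smul]
  have key : (‖(⨍ u in ball z r, g u) - c‖₊ : ℝ≥0∞) * m ^ (1/2 : ℝ)
      ≤ eLpNorm (fun w => g w - c) 2 ν := by
    have := avg_nnnorm_le hr hgc
    rwa [havg] at this
  have hconst : eLpNorm (fun _ : E => (⨍ u in ball z r, g u) - c) 2 ν
      = (‖(⨍ u in ball z r, g u) - c‖₊ : ℝ≥0∞) * m ^ (1/2 : ℝ) := by
    rw [eLpNorm_const _ two_ne_zero hν0, hν, Measure.restrict_apply_univ, ← hm]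
    norm_num
    rfl
  have split : (fun w => g w - ⨍ u in ball z r, g u)
      = (fun w => g w - c) + (fun _ => c - ⨍ u in ball z r, g u) := by
    funext w; simp only [Pi.add_apply]; ring
  calc eLpNorm (fun w => g w - ⨍ u in ball z r, g u) 2 ν
      ≤ eLpNorm (fun w => g w - c) 2 ν
        + eLpNorm (fun _ : E => c - ⨍ u in ball z r, g u) 2 ν := by
        rw [split]
        exact eLpNorm_add_le hgc.aestronglyMeasurable aestronglyMeasurable_const one_le_two
    _ ≤ eLpNorm (fun w => g w - c) 2 ν + eLpNorm (fun w => g w - c) 2 ν := by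
        gcongr
        have : eLpNorm (fun _ : E => c - ⨍ u in ball z r, g u) 2 ν
            = eLpNorm (fun _ : E => (⨍ u in ball z r, g u) - c) 2 ν := by
          apply eLpNorm_congr_norm_ae
          filter_upwards with w
          rw [norm_sub_rev]
        rw [this, hconst]
        exact key
    _ = 2 * eLpNorm (fun w => g w - c) 2 ν := by ring

/-- Pythagoras step -/
lemma pyth (hr : 0 < r) {u v : E → ℂ}
    (hu : MemLp u 2 (volume.restrict (ball z r)))
    (hv : MemLp v 2 (volume.restrict (ball z r)))
    (h0 : ∫ w in ball z r, u w * v w = 0) :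
    eLpNorm u 2 (volume.restrict (ball z r))
      ≤ eLpNorm (fun w => u w - (starRingEnd ℂ) (v w)) 2 (volume.restrict (ball z r)) := by
  set ν := volume.restrict (ball z r) with hν
  have hvc : MemLp (fun w => (starRingEnd ℂ) (v w)) 2 ν := by
    constructor
    · exact Complex.continuous_conj.comp_aestronglyMeasurable hv.aestronglyMeasurable
    · rw [eLpNorm_congr_norm_ae (g := v) (by filter_upwards with w; simp)]
      exact hv.2
  set U : Lp ℂ 2 ν := hu.toLp u with hU
  set V : Lp ℂ 2 ν := hvc.toLp _ with hV
  have hinner : ⟪U, V⟫_ℂ = 0 := by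
    rw [MeasureTheory.L2.inner_def]
    have : ∀ᵐ w ∂ν, ⟪U w, V w⟫_ℂ = (starRingEnd ℂ) (u w * v w) := by
      filter_upwards [hu.coeFn_toLp, hvc.coeFn_toLp] with w h1 h2
      rw [RCLike.inner_apply, h1, h2, map_mul]
      ring
    rw [integral_congr_ae this, integral_conj, h0, map_zero]
  have hnorm : ‖U‖ ≤ ‖U - V‖ := by
    have hsq : ‖U - V‖ ^ 2 = ‖U‖ ^ 2 - 2 * RCLike.re ⟪U, V⟫_ℂ + ‖V‖ ^ 2 :=
      norm_sub_sq (𝕜 := ℂ) U V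
    rw [hinner] at hsq
    simp only [map_zero, mul_zero, sub_zero] at hsq
    nlinarith [norm_nonneg (U - V), norm_nonneg U, norm_nonneg V, sq_nonneg ‖V‖]
  have hUV : (U - V : Lp ℂ 2 ν) = (hu.sub hvc).toLp _ := by
    rw [MemLp.toLp_sub]
  have h1 : eLpNorm u 2 ν = ENNReal.ofReal ‖U‖ := by
    rw [Lp.norm_toLp u hu, ENNReal.ofReal_toReal hu.2.ne]
  have h2 : eLpNorm (fun w => u w - (starRingEnd ℂ) (v w)) 2 ν = ENNReal.ofReal ‖U - V‖ := by
    rw [hUV, Lp.norm_toLp _ (hu.sub hvc), ENNReal.ofReal_toReal (hu.sub hvc).2.ne]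
    rfl
  rw [h1, h2]
  exact ENNReal.ofReal_le_ofReal hnorm

section Key
variable {z : E} {r : ℝ}

lemma memLp_conj {w : Set E} {g : E → ℂ} (hg : MemLp g 2 (volume.restrict w)) :
    MemLp (fun x => (starRingEnd ℂ) (g x)) 2 (volume.restrict w) := by
  refine ⟨Complex.continuous_conj.comp_aestronglyMeasurable hg.aestronglyMeasurable, ?_⟩
  rw [eLpNorm_congr_norm_ae (g := g) (by filter_upwards with x; simp)]
  exact hg.2

lemma integrable_mul2 {s : Set E} {u v : E → ℂ} (hu : MemLp u 2 (volume.restrict s))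
    (hv : MemLp v 2 (volume.restrict s)) :
    Integrable (fun x => u x * v x) (volume.restrict s) := by
  have huc := memLp_conj hu
  have := MeasureTheory.L2.integrable_inner (𝕜 := ℂ) (huc.toLp _) (hv.toLp _)
  apply this.congr
  filter_upwards [huc.coeFn_toLp, hv.coeFn_toLp] with x h1 h2
  rw [RCLike.inner_apply, h1, h2]
  simp
  ring

lemma key_ineq (hr : 0 < r) {f h₁ h₂ : E → ℂ}
    (hf : MemLp f 2 (volume.restrict (ball z r)))
    (hd1 : DifferentiableOn ℂ h₁ (ball z r)) (hd2 : DifferentiableOn ℂ h₂ (ball z r))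
    (he1 : eLpNorm (fun w => f w - h₁ w) 2 (volume.restrict (ball z r)) < ⊤)
    (he2 : eLpNorm (fun w => f w - (starRingEnd ℂ) (h₂ w)) 2 (volume.restrict (ball z r)) < ⊤) :
    eLpNorm (fun w => f w - ⨍ u in ball z r, f u) 2 (volume.restrict (ball z r))
      ≤ 6 * (eLpNorm (fun w => f w - h₁ w) 2 (volume.restrict (ball z r))
          + eLpNorm (fun w => f w - (starRingEnd ℂ) (h₂ w)) 2 (volume.restrict (ball z r))) := by
  haveI := ball_fin z r
  set ν := volume.restrict (ball z r) with hν
  set N1 := eLpNorm (fun w => f w - h₁ w) 2 ν with hN1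
  set N2 := eLpNorm (fun w => f w - (starRingEnd ℂ) (h₂ w)) 2 ν with hN2
  have asm1 : AEStronglyMeasurable h₁ ν :=
    hd1.continuousOn.aestronglyMeasurable measurableSet_ball
  have asm2 : AEStronglyMeasurable h₂ ν :=
    hd2.continuousOn.aestronglyMeasurable measurableSet_ball
  have asm2c : AEStronglyMeasurable (fun w => (starRingEnd ℂ) (h₂ w)) ν :=
    Complex.continuous_conj.comp_aestronglyMeasurable asm2
  have hm1 : MemLp h₁ 2 ν := by
    refine ⟨asm1, ?_⟩
    have heq : h₁ = fun w => f w - (f w - h₁ w) := by funext w; ring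
    calc eLpNorm h₁ 2 ν = eLpNorm (fun w => f w - (f w - h₁ w)) 2 ν := by rw [← heq]
      _ ≤ eLpNorm f 2 ν + eLpNorm (fun w => f w - h₁ w) 2 ν :=
          eLpNorm_sub_le hf.aestronglyMeasurable (hf.aestronglyMeasurable.sub asm1) one_le_two
      _ < ⊤ := ENNReal.add_lt_top.2 ⟨hf.2, he1⟩
  have hm2c : MemLp (fun w => (starRingEnd ℂ) (h₂ w)) 2 ν := by
    refine ⟨asm2c, ?_⟩
    have heq : (fun w => (starRingEnd ℂ) (h₂ w))
        = fun w => f w - (f w - (starRingEnd ℂ) (h₂ w)) := by funext w; ring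
    calc eLpNorm (fun w => (starRingEnd ℂ) (h₂ w)) 2 ν
        = eLpNorm (fun w => f w - (f w - (starRingEnd ℂ) (h₂ w))) 2 ν := by rw [← heq]
      _ ≤ eLpNorm f 2 ν + eLpNorm (fun w => f w - (starRingEnd ℂ) (h₂ w)) 2 ν :=
          eLpNorm_sub_le hf.aestronglyMeasurable (hf.aestronglyMeasurable.sub asm2c) one_le_two
      _ < ⊤ := ENNReal.add_lt_top.2 ⟨hf.2, he2⟩
  have hm2 : MemLp h₂ 2 ν := by
    refine ⟨asm2, ?_⟩
    rw [eLpNorm_congr_norm_ae (g := fun w => (starRingEnd ℂ) (h₂ w))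
      (by filter_upwards with w; simp)]
    exact hm2c.2
  set u : E → ℂ := fun w => h₁ w - h₁ z with hu
  set v : E → ℂ := fun w => h₂ w - h₂ z with hv
  have hmu : MemLp u 2 ν := hm1.sub (memLp_const _)
  have hmv : MemLp v 2 ν := hm2.sub (memLp_const _)
  -- orthogonality
  have horth : ∫ w in ball z r, u w * v w = 0 := by
    have hduv : DifferentiableOn ℂ (fun w => u w * v w) (ball z r) :=
      (hd1.sub (differentiableOn_const _)).mul (hd2.sub (differentiableOn_const _))
    have hiuv : IntegrableOn (fun w => u w * v w) (ball z r) volume :=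
      integrable_mul2 hmu hmv
    rw [mvp hr hduv hiuv]
    simp [hu]
  have step_c : eLpNorm u 2 ν ≤ eLpNorm (fun w => u w - (starRingEnd ℂ) (v w)) 2 ν :=
    pyth hr hmu hmv horth
  -- the function G and its average
  set Gf : E → ℂ := fun w => h₁ w - (starRingEnd ℂ) (h₂ w) with hGf
  have hGm : MemLp Gf 2 ν := hm1.sub hm2c
  have havgG : ⨍ w in ball z r, Gf w = h₁ z - (starRingEnd ℂ) (h₂ z) := by
    have h1i : IntegrableOn h₁ (ball z r) volume := hm1.integrable one_le_two
    have h2i : IntegrableOn h₂ (ball z r) volume := hm2.integrable one_le_two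
    have h2ci : IntegrableOn (fun w => (starRingEnd ℂ) (h₂ w)) (ball z r) volume :=
      hm2c.integrable one_le_two
    rw [hGf]
    rw [setAverage_eq, integral_sub h1i h2ci, smul_sub]
    rw [mvp hr hd1 h1i]
    have : ∫ w in ball z r, (starRingEnd ℂ) (h₂ w) = (volume (ball z r)).toReal • (starRingEnd ℂ) (h₂ z) := by
      rw [integral_conj, mvp hr hd2 h2i]
      simp [Complex.real_smul, map_mul, Complex.conj_ofReal]
    rw [this, smul_smul, smul_smul]
    have hm0 : (volume (ball z r)).toReal ≠ 0 := by
      have h1 := measure_ball_pos volume z hr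
      have h2 : volume (ball z r) < ⊤ := measure_ball_lt_top
      simp [ENNReal.toReal_eq_zero_iff, h1.ne', h2.ne]
    rw [show (volume.real (ball z r))⁻¹ * (volume (ball z r)).toReal = 1 from inv_mul_cancel₀ hm0, one_smul, one_smul]
  have step_d : eLpNorm (fun w => u w - (starRingEnd ℂ) (v w)) 2 ν
      = eLpNorm (fun w => Gf w - ⨍ x in ball z r, Gf x) 2 ν := by
    apply eLpNorm_congr_ae
    filter_upwards with w
    rw [havgG, hu, hv, hGf]
    simp only [map_sub]
    ring
  have step_e : eLpNorm (fun w => Gf w - ⨍ x in ball z r, Gf x) 2 ν ≤ 2 * eLpNorm Gf 2 ν := by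
    have := dist_avg_le hr hGm 0
    simpa using this
  have step_f : eLpNorm Gf 2 ν ≤ N1 + N2 := by
    have heq : Gf = fun w => (f w - (starRingEnd ℂ) (h₂ w)) - (f w - h₁ w) := by
      funext w; rw [hGf]; ring
    calc eLpNorm Gf 2 ν = eLpNorm (fun w => (f w - (starRingEnd ℂ) (h₂ w)) - (f w - h₁ w)) 2 ν := by
          rw [← heq]
      _ ≤ N2 + N1 := eLpNorm_sub_le (hf.aestronglyMeasurable.sub asm2c)
          (hf.aestronglyMeasurable.sub asm1) one_le_two
      _ = N1 + N2 := add_comm _ _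
  -- assemble
  have step_a : eLpNorm (fun w => f w - ⨍ x in ball z r, f x) 2 ν
      ≤ 2 * eLpNorm (fun w => f w - h₁ z) 2 ν := dist_avg_le hr hf (h₁ z)
  have step_b : eLpNorm (fun w => f w - h₁ z) 2 ν ≤ N1 + eLpNorm u 2 ν := by
    have heq : (fun w => f w - h₁ z) = fun w => (f w - h₁ w) + u w := by
      funext w; rw [hu]; ring
    calc eLpNorm (fun w => f w - h₁ z) 2 ν = eLpNorm (fun w => (f w - h₁ w) + u w) 2 ν := by
          rw [← heq]
      _ ≤ N1 + eLpNorm u 2 ν := eLpNorm_add_le (hf.aestronglyMeasurable.sub asm1)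
          hmu.aestronglyMeasurable one_le_two
  calc eLpNorm (fun w => f w - ⨍ x in ball z r, f x) 2 ν
      ≤ 2 * eLpNorm (fun w => f w - h₁ z) 2 ν := step_a
    _ ≤ 2 * (N1 + eLpNorm u 2 ν) := by gcongr
    _ ≤ 2 * (N1 + 2 * (N1 + N2)) := by
        gcongr
        exact step_c.trans (step_d.le.trans (le_of_eq rfl) |>.trans (step_e.trans (by gcongr)))
    _ = 6 * N1 + 4 * N2 := by ring
    _ ≤ 6 * N1 + 6 * N2 := by gcongr <;> norm_num
    _ = 6 * (N1 + N2) := by ring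
end Key

section Main
variable {z : E} {r : ℝ}

lemma body_eq (f h : E → ℂ) (z : E) (r : ℝ) :
    ((volume (ball z r))⁻¹ * ∫⁻ w in ball z r, (‖f w - h w‖₊ : ℝ≥0∞) ^ (2:ℝ)) ^ (1/(2:ℝ))
      = (volume (ball z r))⁻¹ ^ (1/2 : ℝ)
        * eLpNorm (fun w => f w - h w) 2 (volume.restrict (ball z r)) := by
  rw [eLpNorm_eq_lintegral_rpow_enorm_toReal two_ne_zero ENNReal.ofNat_ne_top]
  simp only [ENNReal.toReal_ofNat]
  rw [ENNReal.mul_rpow_of_nonneg _ _ (by norm_num : (0:ℝ) ≤ 1/2)]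
  rfl

lemma MO_eq (f : E → ℂ) (z : E) (r : ℝ) :
    MO r f z = (volume (ball z r))⁻¹ ^ (1/2 : ℝ)
      * eLpNorm (fun w => f w - ⨍ u in ball z r, f u) 2 (volume.restrict (ball z r)) :=
  body_eq f (fun _ => ⨍ u in ball z r, f u) z r

lemma avg_conj (f : E → ℂ) (z : E) (r : ℝ) :
    ⨍ u in ball z r, (starRingEnd ℂ) (f u) = (starRingEnd ℂ) (⨍ u in ball z r, f u) := by
  rw [setAverage_eq, setAverage_eq, integral_conj]
  simp [Complex.real_smul, Complex.conj_ofReal]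

lemma MO_conj (f : E → ℂ) (z : E) (r : ℝ) :
    MO r (fun w => (starRingEnd ℂ) (f w)) z = MO r f z := by
  unfold MO
  congr 2
  apply lintegral_congr
  intro w
  rw [avg_conj, ← map_sub]
  congr 2
  exact nnnorm_star _

lemma locLq_conj {f : E → ℂ} (hf : LocLq 2 f) : LocLq 2 (fun w => (starRingEnd ℂ) (f w)) := by
  intro z r hr
  have h := hf z r hr
  refine ⟨Complex.continuous_conj.comp_aestronglyMeasurable h.aestronglyMeasurable, ?_⟩
  rw [eLpNorm_congr_norm_ae (g := f) (by filter_upwards with x; simp)]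
  exact h.2

/-- `G_{2,r}(f) ≤ MO_{2,r}(f) ≤ C (G_{2,r}(f) + G_{2,r}(f̄))` uniformly; consequently
`BMO = BDA_* ∩ conj(BDA_*)`. -/
theorem stmt16 :
    ∃ C : ℝ≥0∞, 0 < C ∧ C ≠ ⊤ ∧
      (∀ f : E → ℂ, LocLq 2 f → ∀ (z : E) (r : ℝ), 0 < r →
        G 2 r f z ≤ MO r f z ∧
        MO r f z ≤ C * (G 2 r f z + G 2 r (fun w => (starRingEnd ℂ) (f w)) z)) ∧
      (∀ f : E → ℂ, LocLq 2 f →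
        ((⨆ z : E, ⨆ r : ℝ, ⨆ _ : 0 < r, MO r f z) < ⊤ ↔
          (⨆ z : E, ⨆ r : ℝ, ⨆ _ : 0 < r, G 2 r f z) < ⊤ ∧
          (⨆ z : E, ⨆ r : ℝ, ⨆ _ : 0 < r,
            G 2 r (fun w => (starRingEnd ℂ) (f w)) z) < ⊤)) := by
  have hofReal : ENNReal.ofReal (2:ℝ) = 2 := by norm_num
  -- first part, stated as a standalone claim
  have part1 : ∀ f : E → ℂ, LocLq 2 f → ∀ (z : E) (r : ℝ), 0 < r →
      G 2 r f z ≤ MO r f z ∧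
      MO r f z ≤ 6 * (G 2 r f z + G 2 r (fun w => (starRingEnd ℂ) (f w)) z) := by
    intro f hf z r hr
    have hfm : MemLp f 2 (volume.restrict (ball z r)) := by
      have := hf z r hr; rwa [hofReal] at this
    have hm0 : volume (ball z r) ≠ 0 := (measure_ball_pos volume z hr).ne'
    have hmt : volume (ball z r) ≠ ⊤ := (measure_ball_lt_top (x := z) (r := r)).ne
    set m := volume (ball z r) with hm
    set a := m⁻¹ ^ (1/2 : ℝ) with ha
    set b := m ^ (1/2 : ℝ) with hb
    have hb0 : b ≠ 0 := by
      rw [hb]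
      simp only [ne_eq, ENNReal.rpow_eq_zero_iff, not_or, not_and]
      constructor
      · intro h; exact absurd h hm0
      · intro h; exact absurd h hmt
    have hb_ne_top : b ≠ ⊤ := ENNReal.rpow_ne_top_of_nonneg (by norm_num) hmt
    have hainv : a = b⁻¹ := by rw [ha, hb, ENNReal.inv_rpow]
    have hab : a * b = 1 := by rw [hainv, ENNReal.inv_mul_cancel hb0 hb_ne_top]
    have ha_ne_top : a ≠ ⊤ := by
      rw [hainv]
      exact ENNReal.inv_ne_top.2 hb0
    have ha0 : a ≠ 0 := by
      rw [hainv]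
      simp [hb_ne_top]
    constructor
    · -- G ≤ MO
      exact iInf_le (fun h : {h : E → ℂ // DifferentiableOn ℂ h (ball z r)} =>
        ((volume (ball z r))⁻¹ * ∫⁻ w in ball z r, (‖f w - h.1 w‖₊ : ℝ≥0∞) ^ (2:ℝ)) ^ (1/(2:ℝ)))
        ⟨fun _ => ⨍ u in ball z r, f u, differentiableOn_const _⟩
    · -- MO ≤ 6 (G + G conj)
      set G1 := G 2 r f z with hG1
      set G2 := G 2 r (fun w => (starRingEnd ℂ) (f w)) z with hG2
      rcases eq_or_ne G1 ⊤ with h1 | h1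
      · rw [h1]
        simp [ENNReal.add_eq_top, ENNReal.mul_top]
      rcases eq_or_ne G2 ⊤ with h2 | h2
      · rw [h2]
        simp [ENNReal.add_eq_top, ENNReal.mul_top]
      apply ENNReal.le_of_forall_pos_le_add
      intro ε hε _
      set δ : ℝ≥0∞ := (ε : ℝ≥0∞) / 12 with hδ
      have hδ0 : δ ≠ 0 := by
        simp [hδ, ENNReal.div_eq_zero_iff, (ENNReal.coe_ne_zero).2 hε.ne']
      -- choose h₁
      have hlt1 : G1 < G1 + δ := ENNReal.lt_add_right h1 hδ0
      obtain ⟨h₁, hh₁⟩ := iInf_lt_iff.1 (lt_of_le_of_lt (le_refl G1) hlt1)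
      have hlt2 : G2 < G2 + δ := ENNReal.lt_add_right h2 hδ0
      obtain ⟨h₂, hh₂⟩ := iInf_lt_iff.1 (lt_of_le_of_lt (le_refl G2) hlt2)
      -- rewrite bodies
      rw [body_eq] at hh₁ hh₂
      set N1 := eLpNorm (fun w => f w - h₁.1 w) 2 (volume.restrict (ball z r)) with hN1
      have hconjswap : eLpNorm (fun w => (starRingEnd ℂ) (f w) - h₂.1 w) 2
          (volume.restrict (ball z r))
          = eLpNorm (fun w => f w - (starRingEnd ℂ) (h₂.1 w)) 2 (volume.restrict (ball z r)) := by
        apply eLpNorm_congr_norm_ae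
        filter_upwards with w
        rw [← norm_star]
        simp [map_sub]
      rw [hconjswap] at hh₂
      set N2 := eLpNorm (fun w => f w - (starRingEnd ℂ) (h₂.1 w)) 2
        (volume.restrict (ball z r)) with hN2
      -- finiteness of N1 N2
      have haN1 : a * N1 < G1 + δ := hh₁
      have haN2 : a * N2 < G2 + δ := hh₂
      have hfin : G1 + δ ≠ ⊤ := by
        simp [ENNReal.add_eq_top, h1, hδ, ENNReal.div_eq_top]
      have hfin2 : G2 + δ ≠ ⊤ := by
        simp [ENNReal.add_eq_top, h2, hδ, ENNReal.div_eq_top]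
      have hba : ∀ X : ℝ≥0∞, b * (a * X) = X := by
        intro X
        rw [← mul_assoc, mul_comm b a, hab, one_mul]
      have hN1fin : N1 < ⊤ := by
        rw [← hba N1]
        exact ENNReal.mul_lt_top hb_ne_top.lt_top (haN1.trans hfin.lt_top)
      have hN2fin : N2 < ⊤ := by
        rw [← hba N2]
        exact ENNReal.mul_lt_top hb_ne_top.lt_top (haN2.trans hfin2.lt_top)
      have hkey := key_ineq hr hfm h₁.2 h₂.2 hN1fin hN2fin
      calc MO r f z
          = a * eLpNorm (fun w => f w - ⨍ u in ball z r, f u) 2 (volume.restrict (ball z r)) :=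
            MO_eq f z r
        _ ≤ a * (6 * (N1 + N2)) := by gcongr
        _ = 6 * (a * N1 + a * N2) := by ring
        _ ≤ 6 * ((G1 + δ) + (G2 + δ)) := by
            have := add_le_add haN1.le haN2.le
            gcongr
        _ = 6 * (G1 + G2) + 12 * δ := by ring
        _ = 6 * (G1 + G2) + ε := by
            rw [hδ, ENNReal.mul_div_cancel' (by norm_num) (by norm_num)]
  refine ⟨6, by norm_num, by norm_num, part1, ?_⟩
  -- second part
  intro f hf
  constructor
  · intro hMO
    constructor
    · refine lt_of_le_of_lt (iSup_le fun z => iSup_le fun r => iSup_le fun hr => ?_) hMO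
      exact le_trans (part1 f hf z r hr).1
        (le_iSup_of_le z (le_iSup_of_le r (le_iSup_of_le hr le_rfl)))
    · refine lt_of_le_of_lt (iSup_le fun z => iSup_le fun r => iSup_le fun hr => ?_) hMO
      have h1 := (part1 _ (locLq_conj hf) z r hr).1
      rw [MO_conj] at h1
      exact le_trans h1 (le_iSup_of_le z (le_iSup_of_le r (le_iSup_of_le hr le_rfl)))
  · rintro ⟨hS1, hS2⟩
    have hbound : ∀ (z : E) (r : ℝ), 0 < r → MO r f z
        ≤ 6 * ((⨆ z : E, ⨆ r : ℝ, ⨆ _ : 0 < r, G 2 r f z)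
            + ⨆ z : E, ⨆ r : ℝ, ⨆ _ : 0 < r, G 2 r (fun w => (starRingEnd ℂ) (f w)) z) := by
      intro z r hr
      refine le_trans (part1 f hf z r hr).2 ?_
      gcongr
      · exact le_iSup_of_le z (le_iSup_of_le r (le_iSup_of_le hr le_rfl))
      · exact le_iSup_of_le z (le_iSup_of_le r (le_iSup_of_le hr le_rfl))
    refine lt_of_le_of_lt (iSup_le fun z => iSup_le fun r => iSup_le fun hr => hbound z r hr) ?_
    exact ENNReal.mul_lt_top (by norm_num) (ENNReal.add_lt_top.2 ⟨hS1, hS2⟩)
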